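/- For every integer a ≥ 0, the rational function (z−2)^{2a+1}·f_a(z) is a polynomial in ℚ[z] whose value at z = 2 is nonzero; that is, f_a has a pole only at z = 2, and this pole has order exactly 2a+1. -/

import Mathlib

open scoped Polynomial

/-- The formal derivative of a rational function, computed via the quotient rule on the
reduced numerator/denominator representation. -/
noncomputable def ratFuncDeriv (f : RatFunc ℚ) : RatFunc ℚ :=
  algebraMap (Polynomial ℚ) (RatFunc ℚ)
      (Polynomial.derivative f.num * f.denom - f.num * Polynomial.derivative f.denom) /
    algebraMap (Polynomial ℚ) (RatFunc ℚ) (f.denom ^ 2)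

/-- The rational functions `f_a ∈ ℚ(z)`, defined by `f_0(z) = -2(z-1)/(z-2)` and
`f_{a+1}(z) = -(z(z-1)/(z-2)) · f_a′(z)`. -/
noncomputable def fA : ℕ → RatFunc ℚ
  | 0 => -2 * (RatFunc.X - 1) / (RatFunc.X - 2)
  | a + 1 => -(RatFunc.X * (RatFunc.X - 1) / (RatFunc.X - 2)) * ratFuncDeriv (fA a)

lemma ratFuncDeriv_eq (f : RatFunc ℚ) (P Q : Polynomial ℚ) (hQ : Q ≠ 0)
    (hf : f * algebraMap (Polynomial ℚ) (RatFunc ℚ) Q = algebraMap (Polynomial ℚ) (RatFunc ℚ) P) :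
    ratFuncDeriv f = algebraMap (Polynomial ℚ) (RatFunc ℚ)
        (Polynomial.derivative P * Q - P * Polynomial.derivative Q) /
      algebraMap (Polynomial ℚ) (RatFunc ℚ) (Q ^ 2) := by
  have hd : f * algebraMap (Polynomial ℚ) (RatFunc ℚ) f.denom
      = algebraMap (Polynomial ℚ) (RatFunc ℚ) f.num := by
    have hd := (RatFunc.num_div_denom f).symm
    rwa [eq_div_iff (RatFunc.algebraMap_ne_zero (RatFunc.denom_ne_zero f))] at hd
  have h0 : f.num * Q = P * f.denom := by
    apply RatFunc.algebraMap_injective ℚ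
    rw [map_mul, map_mul, ← hd, ← hf]
    ring
  have h1 : Polynomial.derivative f.num * Q + f.num * Polynomial.derivative Q
      = Polynomial.derivative P * f.denom + P * Polynomial.derivative f.denom := by
    have := congrArg Polynomial.derivative h0
    simpa [Polynomial.derivative_mul] using this
  rw [ratFuncDeriv, div_eq_div_iff
    (RatFunc.algebraMap_ne_zero (pow_ne_zero 2 (RatFunc.denom_ne_zero f)))
    (RatFunc.algebraMap_ne_zero (pow_ne_zero 2 hQ)), ← map_mul, ← map_mul]
  apply congrArg
  linear_combination (f.denom * Q) * h1
    - (Polynomial.derivative f.denom * Q + Polynomial.derivative Q * f.denom) * h0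

lemma algC2 : algebraMap (Polynomial ℚ) (RatFunc ℚ) (Polynomial.C 2) = 2 := by
  rw [show (Polynomial.C (2:ℚ)) = 2 from map_ofNat _ 2, map_ofNat]

lemma hXC2 : (RatFunc.X - 2 : RatFunc ℚ) ≠ 0 := by
  rw [← RatFunc.algebraMap_X (K := ℚ), ← algC2, ← map_sub]
  exact RatFunc.algebraMap_ne_zero (Polynomial.X_sub_C_ne_zero 2)

/-- For every `a ≥ 0`, `(z-2)^{2a+1} · f_a(z)` is a polynomial whose value at `z = 2` is
nonzero; i.e. `f_a` has a pole only at `z = 2`, of order exactly `2a + 1`. -/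
theorem fA_pole_order (a : ℕ) :
    ∃ p : Polynomial ℚ,
      algebraMap (Polynomial ℚ) (RatFunc ℚ) ((Polynomial.X - Polynomial.C 2) ^ (2 * a + 1)) *
          fA a = algebraMap (Polynomial ℚ) (RatFunc ℚ) p ∧
        Polynomial.eval (2 : ℚ) p ≠ 0 := by
  induction a with
  | zero =>
    refine ⟨-2 * Polynomial.X + Polynomial.C 2, ?_, by norm_num⟩
    simp only [fA, Nat.mul_zero, Nat.zero_add, pow_one, map_sub, map_add, map_mul, map_neg,
      map_ofNat, RatFunc.algebraMap_X, algC2]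
    field_simp [hXC2]
    ring
  | succ a ih =>
    obtain ⟨p, hp, hp2⟩ := ih
    set Q : ℚ[X] := Polynomial.X - Polynomial.C 2 with hQdef
    have hQ0 : Q ≠ 0 := Polynomial.X_sub_C_ne_zero 2
    have hQn0 : Q ^ (2 * a + 1) ≠ 0 := pow_ne_zero _ hQ0
    have hfa : fA a * algebraMap (Polynomial ℚ) (RatFunc ℚ) (Q ^ (2 * a + 1))
        = algebraMap (Polynomial ℚ) (RatFunc ℚ) p := by rw [mul_comm]; exact hp
    have hderiv := ratFuncDeriv_eq (fA a) p (Q ^ (2 * a + 1)) hQn0 hfa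
    have hdQ : Polynomial.derivative (Q ^ (2 * a + 1))
        = Polynomial.C ((2 * a + 1 : ℕ) : ℚ) * Q ^ (2 * a) := by
      rw [Polynomial.derivative_pow]
      simp [hQdef]
    refine ⟨-(Polynomial.X * (Polynomial.X - 1)) *
        (Polynomial.derivative p * Q - Polynomial.C ((2 * a + 1 : ℕ) : ℚ) * p), ?_, ?_⟩
    · show algebraMap (Polynomial ℚ) (RatFunc ℚ) (Q ^ (2 * (a+1) + 1)) *
        (-(RatFunc.X * (RatFunc.X - 1) / (RatFunc.X - 2)) * ratFuncDeriv (fA a)) = _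
      rw [hderiv, hdQ]
      have hX2 : (RatFunc.X - 2 : RatFunc ℚ) = algebraMap (Polynomial ℚ) (RatFunc ℚ) Q := by
        rw [hQdef, map_sub, RatFunc.algebraMap_X, algC2]
      rw [hX2]
      have hX : RatFunc.X = algebraMap (Polynomial ℚ) (RatFunc ℚ) Polynomial.X :=
        (RatFunc.algebraMap_X).symm
      rw [hX]
      have hne1 : algebraMap (Polynomial ℚ) (RatFunc ℚ) Q ≠ 0 := RatFunc.algebraMap_ne_zero hQ0
      have hne2 : algebraMap (Polynomial ℚ) (RatFunc ℚ) ((Q ^ (2*a+1))^2) ≠ 0 :=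
        RatFunc.algebraMap_ne_zero (pow_ne_zero _ hQn0)
      field_simp
      simp only [map_mul, map_sub, map_pow, map_add, map_neg, map_one]
      ring
    · have hev : Polynomial.eval (2:ℚ) (-(Polynomial.X * (Polynomial.X - 1)) *
          (Polynomial.derivative p * Q - Polynomial.C ((2 * a + 1 : ℕ) : ℚ) * p))
          = 2 * ((2*a+1 : ℕ) : ℚ) * Polynomial.eval 2 p := by
        simp [hQdef]; ring
      rw [hev]
      exact mul_ne_zero (mul_ne_zero two_ne_zero (Nat.cast_ne_zero.mpr (by omega))) hp2
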